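/- For every real λ, every integer n ≥ 2 and all integers 1 ≤ q < p ≤ n, it holds that 2·D̃_{pq} − D̃_{pp} − D̃_{qq} = 2·sinh(((q−p)/2)λ)·G, where D̃_{ij} := cosh((min(i,j) − 1/2)λ)·cosh((n − max(i,j) + 1/2)λ) and G := cosh((q − 1/2)λ)·sinh((n − (p+q−1)/2)λ) + cosh((n − p + 1/2)λ)·sinh(((p+q−1)/2)λ). -/
import Mathlib

open Real Matrix Finset

noncomputable section

/-- Real inverse hyperbolic cosine. -/
def arcosh (x : ℝ) : ℝ := Real.log (x + Real.sqrt (x ^ 2 - 1))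

/-- `D̃ᵢⱼ = cosh((min(i,j) − 1/2)λ)·cosh((n − max(i,j) + 1/2)λ)`. -/
def Dtil (n : ℕ) (l : ℝ) (i j : ℕ) : ℝ :=
  Real.cosh (((min i j : ℕ) - (1 : ℝ) / 2) * l) *
    Real.cosh (((n : ℝ) - (max i j : ℕ) + 1 / 2) * l)

/-- The quantity `G`. -/
def Gq (n p q : ℕ) (l : ℝ) : ℝ :=
  Real.cosh (((q : ℝ) - 1 / 2) * l) *
      Real.sinh (((n : ℝ) - ((p : ℝ) + (q : ℝ) - 1) / 2) * l) +
    Real.cosh (((n : ℝ) - (p : ℝ) + 1 / 2) * l) *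
      Real.sinh ((((p : ℝ) + (q : ℝ) - 1) / 2) * l)

lemma key (s u v : ℝ) :
    2 * Real.cosh (u + s) * Real.cosh (v + s) - Real.cosh (u - s) * Real.cosh (v + s)
      - Real.cosh (u + s) * Real.cosh (v - s) =
    2 * Real.sinh s * (Real.cosh (u + s) * Real.sinh v + Real.cosh (v + s) * Real.sinh u) := by
  simp only [Real.cosh_add, Real.cosh_sub, Real.sinh_add, Real.sinh_sub]
  ring

/-- `2·D̃ₚq − D̃ₚₚ − D̃qq = 2·sinh(((q−p)/2)λ)·G`. -/
theorem Dtil_combination_eq (l : ℝ) (n p q : ℕ) (hn : 2 ≤ n)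
    (hq : 1 ≤ q) (hqp : q < p) (hpn : p ≤ n) :
    2 * Dtil n l p q - Dtil n l p p - Dtil n l q q =
      2 * Real.sinh ((((q : ℝ) - (p : ℝ)) / 2) * l) * Gq n p q l := by
  have hmin : min p q = q := min_eq_right hqp.le
  have hmax : max p q = p := max_eq_left hqp.le
  have h := key ((((q : ℝ) - (p : ℝ)) / 2) * l) ((((p : ℝ) + (q : ℝ) - 1) / 2) * l)
    (((n : ℝ) - ((p : ℝ) + (q : ℝ) - 1) / 2) * l)
  simp only [Dtil, Gq, hmin, hmax, min_self, max_self]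
  have e1 : ((q : ℝ) - 1 / 2) * l = (((p : ℝ) + (q : ℝ) - 1) / 2) * l + (((q : ℝ) - (p : ℝ)) / 2) * l := by ring
  have e2 : ((n : ℝ) - (p : ℝ) + 1 / 2) * l = ((n : ℝ) - ((p : ℝ) + (q : ℝ) - 1) / 2) * l + (((q : ℝ) - (p : ℝ)) / 2) * l := by ring
  have e3 : ((p : ℝ) - 1 / 2) * l = (((p : ℝ) + (q : ℝ) - 1) / 2) * l - (((q : ℝ) - (p : ℝ)) / 2) * l := by ring
  have e4 : ((n : ℝ) - (q : ℝ) + 1 / 2) * l = ((n : ℝ) - ((p : ℝ) + (q : ℝ) - 1) / 2) * l - (((q : ℝ) - (p : ℝ)) / 2) * l := by ring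
  rw [e1, e2, e3, e4]
  linarith [h]
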